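/- Let $\alpha,x$ be real numbers with $\pi/2\le\alpha x\le3\pi/2$, and let $(r_n)_{n\ge1}$ be positive real numbers such that for some real $\lambda>1$ either $r_n=O(n^{-\lambda})$ or $1/r_n=O(n^{-\lambda})$ as $n\to\infty$. For integers $0\le k\le p$ define $t_{pk}=\Big(\prod_{j=1}^p(1-r_je^{i\alpha x})\Big)^{-1}(-1)^{p-k}e^{i(p-k)x}E_{p-k}^{(p)}$, where $E_m^{(p)}$ is the $m$-th elementary symmetric polynomial in $r_1,\dots,r_p$. Then there exists a constant $K$ such that $\sum_{k=0}^p|t_{pk}|\le K$ for every nonnegative integer $p$; moreover $\sum_{k=0}^p|t_{pk}|\le\Big|\prod_{j=1}^p(1-r_je^{i\alpha x})\Big|^{-1}\prod_{k=1}^p(1+r_k)$. -/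

import Mathlib

open Filter Finset Asymptotics

theorem keylem (θ : ℝ) (r : ℝ) (hr : 0 < r) (hc : Real.cos θ ≤ 0) :
    1 + r ≤ (1 + min r r⁻¹) * ‖1 - (r:ℂ) * Complex.exp ((θ:ℂ) * Complex.I)‖ := by
  have habs : ‖1 - (r:ℂ) * Complex.exp ((θ:ℂ) * Complex.I)‖
      = Real.sqrt (1 - 2*r*Real.cos θ + r^2) := by
    rw [Complex.norm_def, Complex.normSq_apply]
    simp only [Complex.sub_re, Complex.one_re, Complex.mul_re, Complex.ofReal_re,
      Complex.exp_ofReal_mul_I_re, Complex.ofReal_im, Complex.exp_ofReal_mul_I_im,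
      Complex.sub_im, Complex.one_im, Complex.mul_im]
    congr 1
    nlinarith [Real.sin_sq_add_cos_sq θ]
  rw [habs]
  have h1 : Real.sqrt (1 + r^2) ≤ Real.sqrt (1 - 2*r*Real.cos θ + r^2) := by
    apply Real.sqrt_le_sqrt; nlinarith
  have h2 : 1 + r ≤ (1 + min r r⁻¹) * Real.sqrt (1 + r^2) := by
    rcases le_total r 1 with h | h
    · rw [min_eq_left (by nlinarith [inv_nonneg.2 hr.le, mul_inv_cancel₀ hr.ne'])]
      nlinarith [Real.sq_sqrt (by positivity : (0:ℝ) ≤ 1 + r^2),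
        Real.sqrt_nonneg (1 + r^2), Real.one_le_sqrt.2 (by nlinarith : (1:ℝ) ≤ 1 + r^2)]
    · rw [min_eq_right (by nlinarith [mul_inv_cancel₀ hr.ne'] : r⁻¹ ≤ r)]
      have hs : r ≤ Real.sqrt (1 + r^2) := by
        nlinarith [Real.sq_sqrt (by positivity : (0:ℝ) ≤ 1 + r^2), Real.sqrt_nonneg (1 + r^2)]
      have : (1 + r⁻¹) * r = 1 + r := by field_simp; ring
      calc 1 + r = (1 + r⁻¹) * r := this.symm
        _ ≤ (1 + r⁻¹) * Real.sqrt (1 + r^2) := by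
            apply mul_le_mul_of_nonneg_left hs (by positivity)
  exact h2.trans (mul_le_mul_of_nonneg_left h1 (by positivity))

/-- The Toeplitz coefficients
`t_{pk} = (∏_{j=1}^p (1 - r_j e^{iαx}))⁻¹ · (-1)^{p-k} e^{i(p-k)x} E_{p-k}^{(p)}`. -/
noncomputable def tcoef (α x : ℝ) (r : ℕ → ℝ) (p k : ℕ) : ℂ :=
  (∏ j ∈ Finset.Icc 1 p, (1 - (r j : ℂ) * Complex.exp ((α * x) * Complex.I)))⁻¹ *
    ((-1 : ℂ) ^ (p - k) * Complex.exp ((((p : ℝ) - (k : ℝ)) * x) * Complex.I) *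
      ∑ s ∈ (Finset.Icc 1 p).powersetCard (p - k), ∏ j ∈ s, (r j : ℂ))

theorem sumabs (α x : ℝ) (r : ℕ → ℝ) (hr : ∀ n, 1 ≤ n → 0 < r n) (p : ℕ) :
    ∑ k ∈ range (p + 1), ‖tcoef α x r p k‖ =
      (‖∏ j ∈ Finset.Icc 1 p,
        (1 - (r j : ℂ) * Complex.exp ((α * x) * Complex.I))‖)⁻¹ *
        ∏ j ∈ Finset.Icc 1 p, (1 + r j) := by
  have hE : ∀ m : ℕ, ‖∑ s ∈ (Finset.Icc 1 p).powersetCard m, ∏ j ∈ s, (r j : ℂ)‖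
      = ∑ s ∈ (Finset.Icc 1 p).powersetCard m, ∏ j ∈ s, r j := by
    intro m
    rw [show (∑ s ∈ (Finset.Icc 1 p).powersetCard m, ∏ j ∈ s, (r j : ℂ))
        = ((∑ s ∈ (Finset.Icc 1 p).powersetCard m, ∏ j ∈ s, r j : ℝ) : ℂ) by push_cast; rfl,
      Complex.norm_real, Real.norm_eq_abs, abs_of_nonneg]
    refine Finset.sum_nonneg fun s hs => Finset.prod_nonneg fun j hj => ?_
    have := (Finset.mem_powersetCard.mp hs).1 hj
    exact (hr j (Finset.mem_Icc.mp this).1).le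
  have habs_t : ∀ k, ‖tcoef α x r p k‖ =
      (‖∏ j ∈ Finset.Icc 1 p,
        (1 - (r j : ℂ) * Complex.exp ((α * x) * Complex.I))‖)⁻¹ *
        ∑ s ∈ (Finset.Icc 1 p).powersetCard (p - k), ∏ j ∈ s, r j := by
    intro k
    unfold tcoef
    rw [norm_mul, norm_inv, norm_mul, norm_mul, hE]
    simp [Complex.norm_exp]
  rw [Finset.sum_congr rfl fun k _ => habs_t k, ← Finset.mul_sum]
  congr 1
  have hreflect : ∑ k ∈ range (p + 1),
      (∑ s ∈ (Finset.Icc 1 p).powersetCard (p - k), ∏ j ∈ s, r j)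
      = ∑ m ∈ range (p + 1), ∑ s ∈ (Finset.Icc 1 p).powersetCard m, ∏ j ∈ s, r j := by
    rw [← Finset.sum_range_reflect]
    refine Finset.sum_congr rfl fun j hj => ?_
    rw [Finset.mem_range] at hj
    rw [show p - (p + 1 - 1 - j) = j from by omega]
  rw [hreflect]
  have hcard : (Finset.Icc 1 p).card = p := by simp
  have hps : ∑ m ∈ range (p + 1), ∑ s ∈ (Finset.Icc 1 p).powersetCard m, ∏ j ∈ s, r j
      = ∑ s ∈ (Finset.Icc 1 p).powerset, ∏ j ∈ s, r j := by
    rw [Finset.sum_powerset, hcard]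
  rw [hps]
  have := Finset.prod_add r (fun _ => (1:ℝ)) (Finset.Icc 1 p)
  simp only [Finset.prod_const_one, mul_one] at this
  rw [show (∏ j ∈ Finset.Icc 1 p, (1 + r j)) = ∏ j ∈ Finset.Icc 1 p, (r j + 1) from
    Finset.prod_congr rfl fun j _ => by ring, this]
theorem stmt_11 (α x : ℝ) (h1 : Real.pi / 2 ≤ α * x) (h2 : α * x ≤ 3 * Real.pi / 2)
    (r : ℕ → ℝ) (hr : ∀ n, 1 ≤ n → 0 < r n)
    (hlam : ∃ lam : ℝ, 1 < lam ∧
      (((fun n : ℕ => r n) =O[atTop] fun n : ℕ => (n : ℝ) ^ (-lam)) ∨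
       ((fun n : ℕ => (r n)⁻¹) =O[atTop] fun n : ℕ => (n : ℝ) ^ (-lam)))) :
    (∃ K : ℝ, ∀ p : ℕ, ∑ k ∈ range (p + 1), ‖tcoef α x r p k‖ ≤ K) ∧
    ∀ p : ℕ, ∑ k ∈ range (p + 1), ‖tcoef α x r p k‖ ≤
      (‖∏ j ∈ Finset.Icc 1 p,
        (1 - (r j : ℂ) * Complex.exp ((α * x) * Complex.I))‖)⁻¹ *
        ∏ j ∈ Finset.Icc 1 p, (1 + r j) := by
  have heq := sumabs α x r hr
  refine ⟨?_, fun p => (heq p).le⟩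
  -- cos (αx) ≤ 0
  have hcos : Real.cos (α * x) ≤ 0 :=
    Real.cos_nonpos_of_pi_div_two_le_of_le h1 (by linarith)
  set c : ℕ → ℝ := fun n => max 0 (min (r n) (r n)⁻¹) with hc
  have hc_nonneg : ∀ n, 0 ≤ c n := fun n => le_max_left 0 _
  have hc_eq : ∀ n, 1 ≤ n → c n = min (r n) (r n)⁻¹ := by
    intro n hn
    exact max_eq_right (le_min (hr n hn).le (inv_pos.2 (hr n hn)).le)
  -- summability of c
  obtain ⟨lam, hlam1, hcase⟩ := hlam
  have hc_sum : Summable c := by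
    have hsum_g : Summable (fun n : ℕ => (n : ℝ) ^ (-lam)) :=
      Real.summable_nat_rpow.mpr (by linarith)
    rcases hcase with hO | hO
    · refine summable_of_isBigO_nat hsum_g (IsBigO.trans ?_ hO)
      rw [isBigO_iff]
      refine ⟨1, eventually_atTop.2 ⟨1, fun n hn => ?_⟩⟩
      rw [one_mul, Real.norm_eq_abs, Real.norm_eq_abs, abs_of_nonneg (hc_nonneg n),
        abs_of_nonneg (hr n hn).le, hc_eq n hn]
      exact min_le_left _ _
    · refine summable_of_isBigO_nat hsum_g (IsBigO.trans ?_ hO)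
      rw [isBigO_iff]
      refine ⟨1, eventually_atTop.2 ⟨1, fun n hn => ?_⟩⟩
      rw [one_mul, Real.norm_eq_abs, Real.norm_eq_abs, abs_of_nonneg (hc_nonneg n),
        abs_of_nonneg (inv_pos.2 (hr n hn)).le, hc_eq n hn]
      exact min_le_right _ _
  refine ⟨Real.exp (∑' n, c n), fun p => ?_⟩
  rw [heq p]
  -- rewrite exp argument cast
  have hcast : ((α : ℂ) * (x : ℂ)) = (((α * x : ℝ)) : ℂ) := by push_cast; ring
  -- per-factor bound
  have hfac : ∀ j ∈ Finset.Icc 1 p,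
      (‖1 - (r j : ℂ) * Complex.exp ((α * x) * Complex.I)‖)⁻¹ * (1 + r j)
        ≤ 1 + c j := by
    intro j hj
    have hj1 : 1 ≤ j := (Finset.mem_Icc.mp hj).1
    have hrj := hr j hj1
    have hk := keylem (α * x) (r j) hrj hcos
    rw [← hcast] at hk
    have habs_pos : 0 < ‖1 - (r j : ℂ) * Complex.exp ((α : ℂ) * (x : ℂ) * Complex.I)‖ := by
      rcases (norm_nonneg (1 - (r j : ℂ) * Complex.exp ((α : ℂ) * (x : ℂ) * Complex.I))).lt_or_eq with h | h
      · exact h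
      · exfalso
        rw [← h, mul_zero] at hk
        have : 0 < min (r j) (r j)⁻¹ := lt_min hrj (inv_pos.2 hrj)
        linarith
    rw [hc_eq j hj1, inv_mul_le_iff₀ habs_pos]
    linarith [hk, mul_comm (1 + min (r j) (r j)⁻¹)
      (‖1 - (r j : ℂ) * Complex.exp ((α : ℂ) * (x : ℂ) * Complex.I)‖)]
  calc (‖∏ j ∈ Finset.Icc 1 p,
        (1 - (r j : ℂ) * Complex.exp ((α * x) * Complex.I))‖)⁻¹ *
        ∏ j ∈ Finset.Icc 1 p, (1 + r j)
      = ∏ j ∈ Finset.Icc 1 p,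
        ((‖1 - (r j : ℂ) * Complex.exp ((α * x) * Complex.I)‖)⁻¹ * (1 + r j)) := by
        rw [norm_prod, ← Finset.prod_inv_distrib, ← Finset.prod_mul_distrib]
    _ ≤ ∏ j ∈ Finset.Icc 1 p, (1 + c j) := by
        refine Finset.prod_le_prod (fun j hj => mul_nonneg (inv_nonneg.2 (norm_nonneg _))
          (by linarith [hr j (Finset.mem_Icc.mp hj).1])) hfac
    _ ≤ ∏ j ∈ Finset.Icc 1 p, Real.exp (c j) := by
        refine Finset.prod_le_prod (fun j hj => by positivity)
          (fun j hj => by linarith [Real.add_one_le_exp (c j)])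
    _ = Real.exp (∑ j ∈ Finset.Icc 1 p, c j) := (Real.exp_sum _ _).symm
    _ ≤ Real.exp (∑' n, c n) := by
        apply Real.exp_le_exp.2
        exact hc_sum.sum_le_tsum _ (fun i _ => hc_nonneg i)
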